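/- Let f : ℝⁿ → ℝ be continuously differentiable with gradient g, bounded below on ℝⁿ, and suppose g is Lipschitz continuous on ℝⁿ with constant L > 0. Let σ ∈ (0,1), η_max ∈ [0,1], λ_min > 0, and 0 < ρ₁ ≤ ρ₂ < 1. Let (x_k), (α_k), (η_k), (Q_k), (C_k) be sequences with: Q₀ = 1, C₀ = f(x₀); for each k, η_k ∈ [0, η_max], Q_{k+1} = η_k Q_k + 1, C_{k+1} = (η_k Q_k C_k + f(x_{k+1}))/Q_{k+1}; α_k > 0 and x_{k+1} = x_k − α_k g(x_k); the nonmonotone Armijo condition f(x_k − α_k g(x_k)) ≤ C_k − σ α_k ‖g(x_k)‖² holds; and for each k, either α_k ≥ λ_min, or there exists α′_k > 0 with ρ₁ α′_k ≤ α_k ≤ ρ₂ α′_k and f(x_k − α′_k g(x_k)) > C_k − σ α′_k ‖g(x_k)‖² (a rejected backtracking trial). Then liminf_{k→∞} ‖g(x_k)‖ = 0; and if moreover η_max < 1, then lim_{k→∞} ‖g(x_k)‖ = 0. -/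

import Mathlib

set_option maxHeartbeats 1000000

open InnerProductSpace in
lemma descent_aux {n : ℕ} (f : EuclideanSpace ℝ (Fin n) → ℝ) (hf : ContDiff ℝ 1 f)
    (g : EuclideanSpace ℝ (Fin n) → EuclideanSpace ℝ (Fin n))
    (hg : ∀ z, g z = gradient f z) (L : ℝ) (hL : 0 ≤ L)
    (hLip : ∀ x y, ‖g x - g y‖ ≤ L * ‖x - y‖)
    (x0 : EuclideanSpace ℝ (Fin n)) (t : ℝ) :
    f (x0 - t • g x0) ≤ f x0 - t * ‖g x0‖ ^ 2 + L * t ^ 2 * ‖g x0‖ ^ 2 := by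
  have hdiff : Differentiable ℝ f := hf.differentiable one_ne_zero
  have hfd : ∀ z, fderiv ℝ f z = toDual ℝ _ (g z) := by
    intro z
    rw [hg]
    simp [gradient, LinearIsometryEquiv.apply_symm_apply]
  set v : EuclideanSpace ℝ (Fin n) := -(t • g x0) with hv
  have hb : ∀ z ∈ segment ℝ x0 (x0 + v), ‖fderiv ℝ f z - fderiv ℝ f x0‖ ≤ L * ‖v‖ := by
    rintro z ⟨a, b, ha, hb0, hab, rfl⟩
    rw [hfd, hfd, ← map_sub, LinearIsometryEquiv.norm_map]
    have hz : a • x0 + b • (x0 + v) - x0 = b • v := by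
      have h1 : a • x0 + b • (x0 + v) = x0 + b • v := by
        rw [smul_add, ← add_assoc, ← add_smul, hab, one_smul]
      rw [h1]; abel
    calc ‖g (a • x0 + b • (x0 + v)) - g x0‖ ≤ L * ‖a • x0 + b • (x0 + v) - x0‖ := hLip _ _
      _ ≤ L * ‖v‖ := by
          rw [hz, norm_smul, Real.norm_eq_abs, abs_of_nonneg hb0]
          have hb1 : b ≤ 1 := by linarith
          nlinarith [mul_nonneg (mul_nonneg hL (norm_nonneg v)) (by linarith : (0:ℝ) ≤ 1 - b)]
  have key := (convex_segment x0 (x0 + v)).norm_image_sub_le_of_norm_fderiv_le'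
    (fun z _ => hdiff z) hb (left_mem_segment ℝ x0 (x0 + v)) (right_mem_segment ℝ x0 (x0 + v))
  rw [hfd] at key
  have hip : (toDual ℝ (EuclideanSpace ℝ (Fin n)) (g x0)) (x0 + v - x0) = -(t * ‖g x0‖ ^ 2) := by
    rw [add_sub_cancel_left, toDual_apply_apply, hv, inner_neg_right, inner_smul_right,
      real_inner_self_eq_norm_sq]
  rw [hip, add_sub_cancel_left] at key
  have hnv : ‖v‖ = |t| * ‖g x0‖ := by rw [hv, norm_neg, norm_smul, Real.norm_eq_abs]
  have h1 : f (x0 + v) - f x0 - -(t * ‖g x0‖ ^ 2) ≤ L * ‖v‖ * ‖v‖ :=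
    le_trans (le_abs_self _) (by rwa [Real.norm_eq_abs] at key)
  have hxv : x0 + v = x0 - t • g x0 := by rw [hv]; abel
  rw [hxv] at h1
  have h2 : ‖v‖ * ‖v‖ = t ^ 2 * ‖g x0‖ ^ 2 := by
    rw [hnv, show |t| * ‖g x0‖ * (|t| * ‖g x0‖) = |t| ^ 2 * ‖g x0‖ ^ 2 by ring, sq_abs]
  have h3 : L * ‖v‖ * ‖v‖ = L * t ^ 2 * ‖g x0‖ ^ 2 := by rw [mul_assoc, h2]; ring
  linarith


theorem gm_aos_cone_global_convergence (n : ℕ)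
    (f : EuclideanSpace ℝ (Fin n) → ℝ) (hf : ContDiff ℝ 1 f)
    (hbdd : BddBelow (Set.range f))
    (g : EuclideanSpace ℝ (Fin n) → EuclideanSpace ℝ (Fin n))
    (hg : ∀ z, g z = gradient f z)
    (L : ℝ) (hL : 0 < L)
    (hLip : ∀ x y : EuclideanSpace ℝ (Fin n), ‖g x - g y‖ ≤ L * ‖x - y‖)
    (σ : ℝ) (hσ : σ ∈ Set.Ioo (0 : ℝ) 1)
    (ηmax : ℝ) (hηmax : ηmax ∈ Set.Icc (0 : ℝ) 1)
    (lamMin : ℝ) (hlamMin : 0 < lamMin)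
    (ρ₁ ρ₂ : ℝ) (hρ₁ : 0 < ρ₁) (hρ₁₂ : ρ₁ ≤ ρ₂) (hρ₂ : ρ₂ < 1)
    (x : ℕ → EuclideanSpace ℝ (Fin n)) (α η Q C : ℕ → ℝ)
    (hQ0 : Q 0 = 1) (hC0 : C 0 = f (x 0))
    (hη : ∀ k, η k ∈ Set.Icc (0 : ℝ) ηmax)
    (hQrec : ∀ k, Q (k + 1) = η k * Q k + 1)
    (hCrec : ∀ k, C (k + 1) = (η k * Q k * C k + f (x (k + 1))) / Q (k + 1))
    (hαpos : ∀ k, α k > 0)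
    (hstep : ∀ k, x (k + 1) = x k - α k • g (x k))
    (harmijo : ∀ k, f (x k - α k • g (x k)) ≤ C k - σ * α k * ‖g (x k)‖ ^ 2)
    (hstepsize : ∀ k, α k ≥ lamMin ∨
      ∃ α' : ℝ, α' > 0 ∧ ρ₁ * α' ≤ α k ∧ α k ≤ ρ₂ * α' ∧
        f (x k - α' • g (x k)) > C k - σ * α' * ‖g (x k)‖ ^ 2) :
    Filter.liminf (fun k => ‖g (x k)‖) Filter.atTop = 0 ∧
    (ηmax < 1 →
      Filter.Tendsto (fun k => ‖g (x k)‖) Filter.atTop (nhds 0)) := by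
  obtain ⟨hσ0, hσ1⟩ := hσ
  obtain ⟨hηm0, hηm1⟩ := hηmax
  obtain ⟨B, hB⟩ := hbdd
  have hBf : ∀ z, B ≤ f z := fun z => hB ⟨z, rfl⟩
  have hQ1 : ∀ k, 1 ≤ Q k := by
    intro k
    induction k with
    | zero => rw [hQ0]
    | succ k ih =>
      rw [hQrec]
      nlinarith [(hη k).1]
  have hfC : ∀ k, f (x k) ≤ C k := by
    intro k
    induction k with
    | zero => rw [hC0]
    | succ k ih =>
      have h1 : f (x (k + 1)) ≤ C k - σ * α k * ‖g (x k)‖ ^ 2 := by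
        rw [hstep k]; exact harmijo k
      rw [hCrec k, le_div_iff₀ (by linarith [hQ1 (k+1)] : (0:ℝ) < Q (k+1)), hQrec k]
      nlinarith [mul_nonneg (hη k).1 (by linarith [hQ1 k] : (0:ℝ) ≤ Q k),
        mul_nonneg (mul_nonneg hσ0.le (hαpos k).le) (sq_nonneg ‖g (x k)‖)]
  have hdec : ∀ k, C (k + 1) ≤ C k - σ * α k * ‖g (x k)‖ ^ 2 / Q (k + 1) := by
    intro k
    have h1 : f (x (k + 1)) ≤ C k - σ * α k * ‖g (x k)‖ ^ 2 := by
      rw [hstep k]; exact harmijo k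
    have hQp : (0:ℝ) < Q (k+1) := by linarith [hQ1 (k+1)]
    have hR : C k - σ * α k * ‖g (x k)‖ ^ 2 / Q (k+1)
        = (C k * Q (k+1) - σ * α k * ‖g (x k)‖ ^ 2) / Q (k+1) := by
      field_simp
    rw [hCrec k, hR, div_le_div_iff_of_pos_right hQp]
    rw [hQrec k]
    nlinarith [mul_nonneg (hη k).1 (by linarith [hQ1 k] : (0:ℝ) ≤ Q k)]
  have hterm_nonneg : ∀ k, 0 ≤ σ * α k * ‖g (x k)‖ ^ 2 / Q (k + 1) := fun k =>
    div_nonneg (mul_nonneg (mul_nonneg hσ0.le (hαpos k).le) (sq_nonneg _))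
      (by linarith [hQ1 (k+1)])
  have hCB : ∀ k, B ≤ C k := fun k => le_trans (hBf (x k)) (hfC k)
  have hsum : ∀ N, ∑ k ∈ Finset.range N, σ * α k * ‖g (x k)‖ ^ 2 / Q (k + 1) ≤ C 0 - B := by
    intro N
    have tel : ∑ k ∈ Finset.range N, (C k - C (k+1)) = C 0 - C N := Finset.sum_range_sub' C N
    calc ∑ k ∈ Finset.range N, σ * α k * ‖g (x k)‖ ^ 2 / Q (k + 1)
        ≤ ∑ k ∈ Finset.range N, (C k - C (k+1)) :=
          Finset.sum_le_sum (fun k _ => by linarith [hdec k])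
      _ = C 0 - C N := tel
      _ ≤ C 0 - B := by linarith [hCB N]
  have hSummable : Summable (fun k => σ * α k * ‖g (x k)‖ ^ 2 / Q (k + 1)) :=
    summable_of_sum_range_le hterm_nonneg hsum
  set c := min lamMin ((1 - σ) * ρ₁ / L) with hc
  have hcpos : 0 < c := lt_min hlamMin (div_pos (mul_pos (by linarith) hρ₁) hL)
  have hαc : ∀ k, c * ‖g (x k)‖ ^ 2 ≤ α k * ‖g (x k)‖ ^ 2 := by
    intro k
    rcases eq_or_ne ‖g (x k)‖ 0 with h0 | h0
    · rw [h0]; simp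
    have hgpos : 0 < ‖g (x k)‖ ^ 2 := by positivity
    have hαk : c ≤ α k := by
      rcases hstepsize k with h | ⟨α', hα'pos, h1, h2, h3⟩
      · exact le_trans (min_le_left _ _) h
      · have hdesc := descent_aux f hf g hg L hL.le hLip (x k) α'
        have hCk := hfC k
        have hkey : (1 - σ) * α' * ‖g (x k)‖ ^ 2 < L * α' ^ 2 * ‖g (x k)‖ ^ 2 := by nlinarith
        have hLα : (1 - σ) < L * α' := by nlinarith [mul_pos hα'pos hgpos]
        calc c ≤ (1 - σ) * ρ₁ / L := min_le_right _ _
          _ ≤ ρ₁ * α' := by rw [div_le_iff₀ hL]; nlinarith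
          _ ≤ α k := h1
    exact mul_le_mul_of_nonneg_right hαk (sq_nonneg _)
  constructor
  · -- liminf part
    have hQlin : ∀ k : ℕ, Q k ≤ (k : ℝ) + 1 := by
      intro k
      induction k with
      | zero => rw [hQ0]; norm_num
      | succ k ih =>
        rw [hQrec]
        push_cast
        nlinarith [(hη k).1, (hη k).2, hQ1 k]
    have hfreq : ∀ ε : ℝ, 0 < ε → ∃ᶠ k in Filter.atTop, ‖g (x k)‖ < ε := by
      intro ε hε
      by_contra hcon
      rw [Filter.not_frequently] at hcon
      simp only [not_lt] at hcon
      obtain ⟨K, hK⟩ := Filter.eventually_atTop.mp hcon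
      have hsh : Summable (fun k => σ * α (k + K) * ‖g (x (k + K))‖ ^ 2 / Q (k + K + 1)) :=
        (summable_nat_add_iff K).mpr hSummable
      have hcomp : Summable (fun k : ℕ => σ * c * ε ^ 2 * (((k + (K + 2) : ℕ) : ℝ))⁻¹) := by
        apply Summable.of_nonneg_of_le (fun k => by positivity) _ hsh
        intro k
        have hge : ε ≤ ‖g (x (k + K))‖ := hK (k + K) (Nat.le_add_left K k)
        have hQp : (0:ℝ) < Q (k + K + 1) := by linarith [hQ1 (k + K + 1)]
        have hQb : Q (k + K + 1) ≤ ((k + (K + 2) : ℕ) : ℝ) := by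
          have := hQlin (k + K + 1)
          push_cast at this ⊢
          linarith
        rw [← div_eq_mul_inv]
        apply div_le_div₀ (mul_nonneg (mul_nonneg hσ0.le (hαpos _).le) (sq_nonneg _)) _ hQp hQb
        have hε2 : ε ^ 2 ≤ ‖g (x (k + K))‖ ^ 2 := by nlinarith [norm_nonneg (g (x (k + K)))]
        nlinarith [hαc (k + K), mul_pos hσ0 hcpos, sq_nonneg ‖g (x (k+K))‖]
      have hne : σ * c * ε ^ 2 ≠ 0 := by positivity
      have hs2 : Summable (fun k : ℕ => (((k + (K + 2) : ℕ) : ℝ))⁻¹) :=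
        (summable_mul_left_iff hne).mp hcomp
      have hs3 : Summable (fun k : ℕ => ((k : ℕ) : ℝ)⁻¹) :=
        (summable_nat_add_iff (K + 2)).mp hs2
      exact Real.not_summable_natCast_inv hs3
    -- conclude liminf = 0
    rw [Filter.liminf_eq]
    set S := {a : ℝ | ∀ᶠ k in Filter.atTop, a ≤ ‖g (x k)‖} with hS
    have hmem : ∀ a ∈ S, ∀ ε : ℝ, 0 < ε → a < ε := by
      intro a ha ε hε
      obtain ⟨k, hk1, hk2⟩ := ((hfreq ε hε).and_eventually ha).exists
      linarith
    have h0S : (0:ℝ) ∈ S := Filter.Eventually.of_forall fun k => norm_nonneg _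
    have hbdd' : BddAbove S := ⟨1, fun a ha => (hmem a ha 1 one_pos).le⟩
    refine le_antisymm ?_ (le_csSup hbdd' h0S)
    by_contra hpos
    push_neg at hpos
    have h1 : sSup S ≤ sSup S / 2 :=
      csSup_le ⟨0, h0S⟩ (fun a ha => (hmem a ha (sSup S / 2) (by linarith)).le)
    linarith
  · -- ηmax < 1 case
    intro hη1
    have hm : (0:ℝ) < 1 - ηmax := by linarith
    have hQle : ∀ k, Q k ≤ 1 / (1 - ηmax) := by
      intro k
      induction k with
      | zero =>
        rw [hQ0, le_div_iff₀ hm]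
        nlinarith
      | succ k ih =>
        rw [hQrec]
        have h1 : η k * Q k ≤ ηmax * (1 / (1 - ηmax)) :=
          mul_le_mul (hη k).2 ih (by linarith [hQ1 k]) hηm0
        have h2 : ηmax * (1 / (1 - ηmax)) + 1 = 1 / (1 - ηmax) := by field_simp; ring
        linarith
    have hsum2 : Summable (fun k => σ * c * (1 - ηmax) * ‖g (x k)‖ ^ 2) := by
      apply Summable.of_nonneg_of_le (fun k => by positivity) _ hSummable
      intro k
      have hQp : (0:ℝ) < Q (k + 1) := by linarith [hQ1 (k+1)]
      rw [le_div_iff₀ hQp]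
      have h1 : (1 - ηmax) * Q (k + 1) ≤ 1 := by
        have := hQle (k + 1)
        rw [le_div_iff₀ hm] at this
        linarith
      nlinarith [hαc k, mul_pos hσ0 hcpos, sq_nonneg ‖g (x k)‖,
        mul_nonneg (mul_nonneg hσ0.le hcpos.le) (sq_nonneg ‖g (x k)‖)]
    have hne : σ * c * (1 - ηmax) ≠ 0 := by positivity
    have hsq : Filter.Tendsto (fun k => ‖g (x k)‖ ^ 2) Filter.atTop (nhds 0) :=
      ((summable_mul_left_iff hne).mp hsum2).tendsto_atTop_zero
    have hcont := (Real.continuous_sqrt.tendsto 0).comp hsq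
    rw [Real.sqrt_zero] at hcont
    convert hcont using 1
    funext k
    simp [Real.sqrt_sq (norm_nonneg _)]
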